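/- Let G be an m×n matrix with entries in {0,1} and let L be a natural number. Suppose the F₂-linear map x ↦ G·x (arithmetic modulo 2) is injective on the set of binary vectors in {0,1}^n of weight at most L. Then, viewing G as a complex matrix (identifying its entries with 0, 1 ∈ ℂ), every family of at most 2L columns of G is linearly independent over ℂ. -/

import Mathlib

open Finset

open Matrix

/-- if the mod-2 map `x ↦ G.mulVec x` is injective on binary vectors of weight
at most `L`, then, viewing the `{0,1}` entries of `G` as complex scalars, every family of at
most `2L` columns of `G` is linearly independent over `ℂ`. -/
theorem stmt11 {m n : ℕ} (G : Matrix (Fin m) (Fin n) (ZMod 2)) (L : ℕ)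
    (hinj : ∀ s₁ s₂ : Fin n → ZMod 2,
      (univ.filter (fun i => s₁ i ≠ 0)).card ≤ L →
      (univ.filter (fun i => s₂ i ≠ 0)).card ≤ L →
      G.mulVec s₁ = G.mulVec s₂ → s₁ = s₂)
    (T : Finset (Fin n)) (hT : T.card ≤ 2 * L) :
    LinearIndependent ℂ
      (fun j : T => (fun i => if G i j.val = 0 then (0 : ℂ) else 1 : Fin m → ℂ)) := by
  classical
  have h01 : ∀ a : ZMod 2, a ≠ 0 → a = 1 := by decide
  -- Step A: mod-2 kernel has no nonzero vector of weight ≤ 2L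
  have hker : ∀ s : Fin n → ZMod 2,
      (univ.filter (fun i => s i ≠ 0)).card ≤ 2 * L → G.mulVec s = 0 → s = 0 := by
    intro s hcard hms
    set supp := univ.filter (fun i => s i ≠ 0) with hsupp
    obtain ⟨A, hA_sub, hA_card⟩ :=
      Finset.exists_subset_card_eq (s := supp) (n := min supp.card L) (min_le_left _ _)
    set s₁ : Fin n → ZMod 2 := fun i => if i ∈ A then s i else 0 with hs₁
    set s₂ : Fin n → ZMod 2 := fun i => if i ∈ A then 0 else s i with hs₂
    have hadd : s₁ + s₂ = s := by
      funext i; by_cases h : i ∈ A <;> simp [hs₁, hs₂, h]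
    have h1card : (univ.filter fun i => s₁ i ≠ 0).card ≤ L := by
      have hsub : (univ.filter fun i => s₁ i ≠ 0) ⊆ A := by
        intro i hi
        simp only [mem_filter, mem_univ, true_and, hs₁] at hi
        by_contra h
        simp [h] at hi
      calc (univ.filter fun i => s₁ i ≠ 0).card ≤ A.card := card_le_card hsub
        _ ≤ L := by rw [hA_card]; exact min_le_right _ _
    have h2card : (univ.filter fun i => s₂ i ≠ 0).card ≤ L := by
      have hsub : (univ.filter fun i => s₂ i ≠ 0) ⊆ supp \ A := by
        intro i hi
        simp only [mem_filter, mem_univ, true_and, hs₂] at hi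
        by_cases h : i ∈ A
        · simp [h] at hi
        · simp only [h, if_false] at hi
          exact mem_sdiff.2 ⟨by simp [hsupp, hi], h⟩
      have h1 := card_le_card hsub
      rw [card_sdiff_of_subset hA_sub, hA_card] at h1
      have h2 : supp.card ≤ 2 * L := hcard
      omega
    have hm12 : G.mulVec s₁ = G.mulVec s₂ := by
      have h0 : G.mulVec s₁ + G.mulVec s₂ = 0 := by
        rw [← Matrix.mulVec_add, hadd, hms]
      funext i
      have h0i := congrFun h0 i
      have : G.mulVec s₁ i = - G.mulVec s₂ i := eq_neg_of_add_eq_zero_left h0i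
      simpa [CharTwo.neg_eq] using this
    have heq := hinj s₁ s₂ h1card h2card hm12
    funext i
    by_cases h : i ∈ A
    · have := congrFun heq i
      simpa [hs₁, hs₂, h] using this
    · have := congrFun heq i
      simp only [hs₁, hs₂, h, if_false] at this
      exact this.symm
  have hzsum : ∀ z : {x // x ∈ T} → ℤ, (∑ j, (z j).natAbs) = 0 → z = 0 := by
    intro z h
    funext j
    have := (Finset.sum_eq_zero_iff.mp h) j (mem_univ j)
    exact Int.natAbs_eq_zero.mp this
  -- the integer 0/1 matrix indexed by T
  set Qz : Matrix (Fin m) {x // x ∈ T} ℤ := fun i j => if G i j.val = 0 then 0 else 1 with hQz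
  -- Step B: integer kernel is trivial
  have hintker : ∀ N (z : {x // x ∈ T} → ℤ), (∑ j, (z j).natAbs) ≤ N →
      Qz.mulVec z = 0 → z = 0 := by
    intro N
    induction N with
    | zero =>
      intro z hz0 _
      exact hzsum z (Nat.le_zero.mp hz0)
    | succ N ih =>
      intro z hN hmv
      by_cases hall0 : z = 0
      · exact hall0
      by_cases hodd : ∃ j, ¬ (2 ∣ z j)
      · -- reduce mod 2 and use hker
        exfalso
        obtain ⟨j₀, hj₀⟩ := hodd
        set s : Fin n → ZMod 2 := fun i =>
          if h : i ∈ T then ((z ⟨i, h⟩ : ℤ) : ZMod 2) else 0 with hsdef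
        have hscard : (univ.filter (fun i => s i ≠ 0)).card ≤ 2 * L := by
          have hsub : (univ.filter (fun i => s i ≠ 0)) ⊆ T := by
            intro i hi
            simp only [mem_filter, mem_univ, true_and, hsdef] at hi
            by_contra h
            simp [h] at hi
          exact le_trans (card_le_card hsub) hT
        have hsmv : G.mulVec s = 0 := by
          funext i
          have hint := congrFun hmv i
          have hcast : ((Qz.mulVec z i : ℤ) : ZMod 2) = 0 := by rw [hint]; simp
          rw [Matrix.mulVec, dotProduct] at hcast
          push_cast at hcast
          have hterm : ∀ j : {x // x ∈ T},
              ((Qz i j : ℤ) : ZMod 2) * ((z j : ℤ) : ZMod 2)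
                = G i j.val * ((z j : ℤ) : ZMod 2) := by
            intro j
            by_cases h : G i j.val = 0
            · simp [hQz, h]
            · rw [h01 _ h]
              simp [hQz, h]
          rw [Finset.sum_congr rfl (fun j _ => hterm j)] at hcast
          show (G.mulVec s) i = 0
          rw [Matrix.mulVec, dotProduct]
          have hzero : ∀ x ∈ (univ : Finset (Fin n)), x ∉ T → G i x * s x = 0 := by
            intro x _ hx
            simp [hsdef, hx]
          rw [← Finset.sum_subset (Finset.subset_univ T) hzero]
          rw [← Finset.sum_attach T (fun x => G i x * s x)]
          rw [← hcast]
          apply Finset.sum_congr rfl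
          intro j _
          simp [hsdef, j.2]
        have hs0 := hker s hscard hsmv
        have : s j₀.val = 0 := by rw [hs0]; rfl
        rw [hsdef] at this
        simp only [j₀.2, dif_pos] at this
        have : ((z ⟨j₀.val, j₀.2⟩ : ℤ) : ZMod 2) = 0 := this
        rw [ZMod.intCast_zmod_eq_zero_iff_dvd] at this
        exact hj₀ (by simpa using this)
      · -- all entries even: divide by 2
        push_neg at hodd
        have hch : ∀ j, ∃ w, z j = 2 * w := fun j => hodd j
        choose w hw using hch
        have hwmv : Qz.mulVec w = 0 := by
          funext i
          have hint := congrFun hmv i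
          rw [Matrix.mulVec, dotProduct] at hint ⊢
          have : ∑ j, Qz i j * z j = 2 * ∑ j, Qz i j * w j := by
            rw [Finset.mul_sum]
            apply Finset.sum_congr rfl
            intro j _
            rw [hw j]; ring
          rw [this] at hint
          have h2 : (2 : ℤ) ≠ 0 := by norm_num
          exact (mul_eq_zero.mp hint).resolve_left h2
        have hsum : ∑ j, (z j).natAbs = 2 * ∑ j, (w j).natAbs := by
          rw [Finset.mul_sum]
          apply Finset.sum_congr rfl
          intro j _
          rw [hw j, Int.natAbs_mul]
          rfl
        have hpos : 0 < ∑ j, (z j).natAbs := by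
          rcases Nat.eq_zero_or_pos (∑ j, (z j).natAbs) with h | h
          · exact absurd (hzsum z h) hall0
          · exact h
        have hwN : ∑ j, (w j).natAbs ≤ N := by omega
        have hw0 := ih w hwN hwmv
        funext j
        rw [hw j, hw0]
        simp
  -- Step C: rational kernel is trivial
  set Qq : Matrix (Fin m) {x // x ∈ T} ℚ := fun i j => if G i j.val = 0 then 0 else 1 with hQq
  have hratker : ∀ x : {x // x ∈ T} → ℚ, Qq.mulVec x = 0 → x = 0 := by
    intro x hx
    set d : ℤ := ∏ j, ((x j).den : ℤ) with hd
    have hdpos : 0 < d := Finset.prod_pos (fun j _ => by positivity)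
    have hden : ∀ j, ((x j).den : ℤ) ∣ d := fun j => Finset.dvd_prod_of_mem _ (mem_univ j)
    choose c hc using hden
    set z : {x // x ∈ T} → ℤ := fun j => (x j).num * c j with hz
    have hzx : ∀ j, (z j : ℚ) = x j * (d : ℚ) := by
      intro j
      have hdq : (d : ℚ) = ((x j).den : ℚ) * (c j : ℚ) := by exact_mod_cast hc j
      rw [hdq, hz]
      push_cast
      rw [← mul_assoc]
      congr 1
      rw [mul_comm, Rat.den_mul_eq_num]
    have hzmv : Qz.mulVec z = 0 := by
      funext i
      have hq := congrFun hx i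
      rw [Matrix.mulVec, dotProduct] at hq
      have hcast : ((Qz.mulVec z i : ℤ) : ℚ) = 0 := by
        rw [Matrix.mulVec, dotProduct]
        push_cast
        have hterm : ∀ j : {x // x ∈ T},
            ((Qz i j : ℤ) : ℚ) * ((z j : ℤ) : ℚ) = Qq i j * x j * (d : ℚ) := by
          intro j
          rw [hzx j]
          by_cases h : G i j.val = 0 <;> simp [hQz, hQq, h, mul_assoc]
        have hsum2 : ∑ j, ((Qz i j : ℤ) : ℚ) * ((z j : ℤ) : ℚ)
            = (∑ j, Qq i j * x j) * (d : ℚ) := by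
          rw [Finset.sum_mul]
          exact Finset.sum_congr rfl (fun j _ => hterm j)
        rw [hsum2, hq]
        simp
      exact_mod_cast hcast
    have hz0 := hintker (∑ j, (z j).natAbs) z le_rfl hzmv
    funext j
    have h1 : (z j : ℚ) = 0 := by rw [hz0]; simp
    rw [hzx j] at h1
    have hd0 : (d : ℚ) ≠ 0 := by exact_mod_cast hdpos.ne'
    have := mul_eq_zero.mp h1
    tauto
  -- Qq has injective mulVec
  have hQqinj : Function.Injective Qq.mulVec := by
    intro a b hab
    have h0 : Qq.mulVec (a - b) = 0 := by
      rw [Matrix.mulVec_sub, hab, sub_self]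
    have := hratker _ h0
    exact sub_eq_zero.mp this
  -- Gram matrix over ℚ is a unit
  have hgram : Function.Injective (Qqᵀ * Qq).mulVec := by
    intro a b hab
    have h0 : (Qqᵀ * Qq).mulVec (a - b) = 0 := by
      rw [Matrix.mulVec_sub, hab, sub_self]
    have hk : (a - b) ∈ LinearMap.ker (Qqᵀ * Qq).mulVecLin := by
      rw [LinearMap.mem_ker, Matrix.mulVecLin_apply]
      exact h0
    rw [Matrix.ker_mulVecLin_transpose_mul_self] at hk
    rw [LinearMap.mem_ker, Matrix.mulVecLin_apply] at hk
    have : Qq.mulVec (a - b) = 0 := hk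
    have := hratker _ this
    exact sub_eq_zero.mp this
  have hunit : IsUnit (Qqᵀ * Qq) := Matrix.mulVec_injective_iff_isUnit.mp hgram
  have hdet : (Qqᵀ * Qq).det ≠ 0 := by
    have h1 : IsUnit (Qqᵀ * Qq).det := (Matrix.isUnit_iff_isUnit_det _).mp hunit
    exact isUnit_iff_ne_zero.mp h1
  -- move to ℂ
  set f : ℚ →+* ℂ := Rat.castHom ℂ with hf
  set C : Matrix (Fin m) {x // x ∈ T} ℂ := Qq.map f with hC
  have hCdet : (Cᵀ * C).det ≠ 0 := by
    have h1 : Cᵀ * C = (Qqᵀ * Qq).map f := by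
      rw [hC, ← Matrix.transpose_map, ← Matrix.map_mul]
    rw [h1, ← RingHom.mapMatrix_apply, ← RingHom.map_det]
    exact fun h => hdet ((map_eq_zero_iff f (RingHom.injective f)).mp h)
  have hCunit : IsUnit (Cᵀ * C) := by
    rw [Matrix.isUnit_iff_isUnit_det, isUnit_iff_ne_zero]
    exact hCdet
  have hCinj : Function.Injective C.mulVec := by
    intro a b hab
    have h0 : (Cᵀ * C).mulVec a = (Cᵀ * C).mulVec b := by
      rw [← Matrix.mulVec_mulVec, ← Matrix.mulVec_mulVec, hab]
    exact Matrix.mulVec_injective_iff_isUnit.mpr hCunit h0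
  have hli : LinearIndependent ℂ (fun j => Cᵀ j) := Matrix.mulVec_injective_iff.mp hCinj
  have hfam : (fun j : T => (fun i => if G i j.val = 0 then (0 : ℂ) else 1 : Fin m → ℂ))
      = fun j => Cᵀ j := by
    funext j
    funext i
    simp [hC, hQq, Matrix.transpose_apply, Matrix.map_apply, apply_ite f]
    split_ifs <;> simp [Matrix.map] <;> assumption
  rw [hfam]
  exact hli
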